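/- If u and v are vertices of T at the same depth and u is to the left of v, then u precedes v in vEB_ε(T). Consequently, the vertices of any single level of T appear in vEB_ε(T) in their left-to-right order. -/

import Mathlib

namespace VEB

inductive OTree : Type where
  | node : List OTree → OTree

def OTree.children : OTree → List OTree
  | .node cs => cs

mutual
  def height : OTree → ℕ
    | .node cs => 1 + heightList cs
  def heightList : List OTree → ℕ
    | [] => 0
    | c :: cs => max (height c) (heightList cs)
end

def subtreeAt? : OTree → List ℕ → Option OTree
  | t, [] => some t
  | t, i :: p =>
    match t.children[i]? with
    | some c => subtreeAt? c p
    | none => none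

/-- `p` is (the path of) a vertex of `t`. -/
def IsVertex (t : OTree) (p : List ℕ) : Prop := (subtreeAt? t p).isSome

/-- `p` is a leaf of `t`. -/
def IsLeaf (t : OTree) (p : List ℕ) : Prop := subtreeAt? t p = some (.node [])

/-- All leaves of `t` are at the same depth (the bottom level). -/
def Uniform (t : OTree) : Prop := ∀ p, IsLeaf t p → p.length + 1 = height t

/-- The top `m+1` levels of `t` (the truncation of height `m+1`). -/
def trunc : ℕ → OTree → OTree
  | 0, _ => .node []
  | m+1, t => .node (t.children.map (trunc m))

/-- Paths of the vertices at depth `m`, in left-to-right order. -/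
def levelPaths : ℕ → OTree → List (List ℕ)
  | 0, _ => [[]]
  | m+1, t => (t.children.zipIdx.map fun ic => (levelPaths m ic.1).map (ic.2 :: ·)).flatten

/-- The level at which a tree of height `h` is cut: `max ⌊ε h⌋ 1`. -/
noncomputable def cutLevel (ε : ℝ) (h : ℕ) : ℕ := max ⌊ε * (h : ℝ)⌋₊ 1

/-- The van Emde Boas order of the vertex paths of `t` (with recursion fuel). -/
noncomputable def vEBAux (ε : ℝ) : ℕ → OTree → List (List ℕ)
  | 0, _ => []
  | fuel+1, t =>
    if height t ≤ 1 then [[]]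
    else
      let m := cutLevel ε (height t)
      vEBAux ε fuel (trunc (m - 1) t) ++
        ((levelPaths m t).map fun q =>
          match subtreeAt? t q with
          | some s => (vEBAux ε fuel s).map (q ++ ·)
          | none => []).flatten

/-- The van Emde Boas order `vEB_ε(t)` of the vertex paths of `t`. -/
noncomputable def vEB (ε : ℝ) (t : OTree) : List (List ℕ) := vEBAux ε (height t) t

/-- Position (index) of vertex `p` in the van Emde Boas order. -/
noncomputable def pos (ε : ℝ) (t : OTree) (p : List ℕ) : ℕ := (vEB ε t).idxOf p

/-- `A` is a set of vertices occupying consecutive positions in `vEB_ε(t)`. -/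
def MemInterval (ε : ℝ) (t : OTree) (A : Set (List ℕ)) : Prop :=
  ∃ i n, A = {p | p ∈ ((vEB ε t).drop i).take n}

/-- The vertices of the decomposition `D` of `t`: pairs `(p, k)` of the root path
and the height of a decomposition subtree (with recursion fuel). -/
noncomputable def decompAux (ε : ℝ) : ℕ → OTree → List (List ℕ × ℕ)
  | 0, _ => []
  | fuel+1, t =>
    if height t ≤ 1 then [([], 1)]
    else
      let m := cutLevel ε (height t)
      ([], height t) ::
        (decompAux ε fuel (trunc (m - 1) t) ++
          ((levelPaths m t).map fun q =>
            match subtreeAt? t q with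
            | some s => (decompAux ε fuel s).map fun r => (q ++ r.1, r.2)
            | none => []).flatten)

/-- The vertices of the decomposition `D` of `t`. -/
noncomputable def decompVerts (ε : ℝ) (t : OTree) : List (List ℕ × ℕ) :=
  decompAux ε (height t) t

/-- The children in the decomposition tree `D` of the decomposition vertex `(p, k)`:
the top tree followed by the bottom trees in left-to-right order. -/
noncomputable def dChildren (ε : ℝ) (t : OTree) (p : List ℕ) (k : ℕ) : List (List ℕ × ℕ) :=
  if k ≤ 1 then []
  else
    match subtreeAt? t p with
    | some s =>
      (p, cutLevel ε k) ::
        (levelPaths (cutLevel ε k) s).map fun q => (p ++ q, k - cutLevel ε k)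
    | none => []

/-- The decomposition subtree `(p, k)` contains the vertex `w` of `t`;
equivalently, the leaf `{w}` of `D` lies in the subtree of `D` rooted at `(p, k)`. -/
def DContains (p : List ℕ) (k : ℕ) (w : List ℕ) : Prop :=
  p <+: w ∧ w.length < p.length + k

/-- Vertex `v` is to the left of the branch with leaf `ℓ`. -/
def LeftOfBranch (v ℓ : List ℕ) : Prop := List.Lex (· < ·) v (ℓ.take v.length)

/-- Vertex `v` is to the right of the branch with leaf `ℓ`. -/
def RightOfBranch (v ℓ : List ℕ) : Prop := List.Lex (· < ·) (ℓ.take v.length) v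

/-- Every internal vertex of `t` has at least `a` children. -/
def MinArity (t : OTree) (a : ℕ) : Prop :=
  ∀ p s, subtreeAt? t p = some s → s.children ≠ [] → a ≤ s.children.length

/-- Every internal vertex of `t` has at most `b` children. -/
def MaxArity (t : OTree) (b : ℕ) : Prop :=
  ∀ p s, subtreeAt? t p = some s → s.children.length ≤ b

/-- `w` lies on the leftmost branch descending from `v` (always taking the leftmost child). -/
def OnLeftmostBranch (v w : List ℕ) : Prop :=
  v <+: w ∧ ∀ n (hn : n < w.length), v.length ≤ n → w.get ⟨n, hn⟩ = 0

/-- `w` lies on the rightmost branch descending from `v` (always taking the rightmost child). -/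
def OnRightmostBranch (t : OTree) (v w : List ℕ) : Prop :=
  v <+: w ∧ ∀ n (hn : n < w.length), v.length ≤ n →
    ∀ s, subtreeAt? t (w.take n) = some s → w.get ⟨n, hn⟩ + 1 = s.children.length


/- ===== basic lemmas ===== -/

lemma height_node (cs : List OTree) : height (.node cs) = 1 + heightList cs := by
  simp [height]

lemma height_pos (t : OTree) : 0 < height t := by
  cases t with | node cs => rw [height_node]; omega

lemma subtreeAt?_cons (t : OTree) (i : ℕ) (p : List ℕ) :
    subtreeAt? t (i :: p) = (t.children[i]?).bind (fun c => subtreeAt? c p) := by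
  rw [subtreeAt?]
  cases t.children[i]? <;> simp

lemma subtreeAt?_append (t : OTree) (p q : List ℕ) :
    subtreeAt? t (p ++ q) = (subtreeAt? t p).bind (fun s => subtreeAt? s q) := by
  induction p generalizing t with
  | nil => simp [subtreeAt?]
  | cons i p ih =>
    rw [List.cons_append, subtreeAt?_cons, subtreeAt?_cons]
    cases t.children[i]? with
    | none => simp
    | some c => simp [ih]

lemma height_le_heightList {c : OTree} {cs : List OTree} (h : c ∈ cs) :
    height c ≤ heightList cs := by
  induction cs with
  | nil => simp at h
  | cons x xs ih =>
    rw [heightList]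
    rcases List.mem_cons.1 h with rfl | h
    · exact le_max_left _ _
    · exact le_trans (ih h) (le_max_right _ _)

lemma exists_max_height {cs : List OTree} (h : cs ≠ []) :
    ∃ c ∈ cs, heightList cs = height c := by
  induction cs with
  | nil => simp at h
  | cons x xs ih =>
    rcases eq_or_ne xs [] with rfl | hxs
    · exact ⟨x, by simp, by simp [heightList]⟩
    · obtain ⟨c, hc, hmax⟩ := ih hxs
      rw [heightList]
      rcases le_total (height x) (heightList xs) with h' | h'
      · exact ⟨c, by simp [hc], by rw [max_eq_right h', hmax]⟩
      · exact ⟨x, by simp, by rw [max_eq_left h']⟩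

lemma height_subtree {t s : OTree} {p : List ℕ} (h : subtreeAt? t p = some s) :
    p.length + height s ≤ height t := by
  induction p generalizing t with
  | nil =>
    rw [subtreeAt?] at h; cases h
    simp only [List.length_nil, Nat.zero_add]
    exact le_refl _
  | cons i p ih =>
    rw [subtreeAt?_cons] at h
    cases hc : t.children[i]? with
    | none => rw [hc] at h; simp at h
    | some c =>
      rw [hc] at h
      simp only [Option.bind_some] at h
      have h1 := ih h
      have h2 : height c ≤ heightList t.children := by
        apply height_le_heightList
        obtain ⟨hlt', heq'⟩ := List.getElem?_eq_some_iff.1 hc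
        exact heq' ▸ List.getElem_mem hlt'
      cases t with | node cs =>
        rw [height_node]
        simp only [OTree.children] at h2
        simp only [List.length_cons]
        omega

lemma exists_deep_leaf' : ∀ (n : ℕ) (t : OTree), height t = n →
    ∃ p, IsLeaf t p ∧ p.length + 1 = height t := by
  intro n
  induction n using Nat.strong_induction_on with
  | _ n ih =>
    intro t hn
    obtain ⟨cs⟩ := t
    rcases eq_or_ne cs [] with rfl | hcs
    · exact ⟨[], rfl, by simp [height_node, heightList]⟩

    · obtain ⟨c, hc, hmax⟩ := exists_max_height hcs
      obtain ⟨i, hilt, hi⟩ := List.mem_iff_getElem.1 hc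
      have hlt : height c < n := by rw [← hn, height_node, ← hmax]; omega
      obtain ⟨q, hq, hqlen⟩ := ih (height c) hlt c rfl
      refine ⟨i :: q, ?_, ?_⟩
      · rw [IsLeaf, subtreeAt?_cons]
        have : (OTree.node cs).children[i]? = some c := by
          simp [OTree.children, List.getElem?_eq_getElem hilt, hi]
        rw [this]; exact hq
      · rw [height_node, hmax]
        simp only [List.length_cons]
        omega

lemma exists_deep_leaf (t : OTree) : ∃ p, IsLeaf t p ∧ p.length + 1 = height t :=
  exists_deep_leaf' (height t) t rfl

lemma subtree_height {t s : OTree} (ht : Uniform t) {p : List ℕ}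
    (h : subtreeAt? t p = some s) : p.length + height s = height t := by
  obtain ⟨q, hq, hqlen⟩ := exists_deep_leaf s
  have hleaf : IsLeaf t (p ++ q) := by
    rw [IsLeaf, subtreeAt?_append, h, Option.bind_some]; exact hq
  have h1 := ht _ hleaf
  have h2 := height_subtree h
  rw [List.length_append] at h1
  omega

lemma subtree_uniform {t s : OTree} (ht : Uniform t) {p : List ℕ}
    (h : subtreeAt? t p = some s) : Uniform s := by
  intro q hq
  have hleaf : IsLeaf t (p ++ q) := by
    rw [IsLeaf, subtreeAt?_append, h, Option.bind_some]; exact hq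
  have h1 := ht _ hleaf
  have h2 := subtree_height ht h
  rw [List.length_append] at h1
  omega

lemma isVertex_prefix {t : OTree} {p : List ℕ} (h : IsVertex t p) (k : ℕ) :
    ∃ s, subtreeAt? t (p.take k) = some s := by
  rw [IsVertex, Option.isSome_iff_exists] at h
  obtain ⟨s, hs⟩ := h
  rw [← List.take_append_drop k p, subtreeAt?_append] at hs
  cases h' : subtreeAt? t (p.take k) with
  | none => rw [h'] at hs; simp at hs
  | some s' => exact ⟨s', rfl⟩

/- ===== trunc lemmas ===== -/

lemma trunc_children (k : ℕ) (t : OTree) :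
    (trunc (k+1) t).children = t.children.map (trunc k) := by
  rw [trunc, OTree.children]

lemma subtreeAt?_trunc {t s : OTree} {p : List ℕ} {k : ℕ} (hp : p.length ≤ k)
    (h : subtreeAt? t p = some s) :
    subtreeAt? (trunc k t) p = some (trunc (k - p.length) s) := by
  induction p generalizing t k with
  | nil =>
    rw [subtreeAt?] at h ⊢
    cases h; simp
  | cons i p ih =>
    obtain ⟨k, rfl⟩ : ∃ k', k = k'+1 := ⟨k-1, by simp at hp; omega⟩
    rw [subtreeAt?_cons] at h
    rw [subtreeAt?_cons, trunc_children, List.getElem?_map]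
    cases hc : t.children[i]? with
    | none => rw [hc] at h; simp at h
    | some c =>
      rw [hc] at h
      simp only [Option.bind_some] at h
      simp only [Option.map_some, Option.bind_some]
      have hlen : p.length ≤ k := by simp at hp; omega
      rw [ih hlen h]
      congr 2
      simp only [List.length_cons]
      omega

lemma isVertex_trunc {t : OTree} {p : List ℕ} {k : ℕ} (h : IsVertex (trunc k t) p) :
    IsVertex t p ∧ p.length ≤ k := by
  induction p generalizing t k with
  | nil => exact ⟨by simp [IsVertex, subtreeAt?], by simp⟩
  | cons i p ih =>
    cases k with
    | zero =>
      exfalso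
      rw [IsVertex, subtreeAt?_cons] at h
      simp [trunc, OTree.children] at h
    | succ k =>
      rw [IsVertex, subtreeAt?_cons, trunc_children, List.getElem?_map] at h
      cases hc : t.children[i]? with
      | none => rw [hc] at h; simp at h
      | some c =>
        rw [hc] at h
        simp only [Option.map_some, Option.bind_some] at h
        obtain ⟨h1, h2⟩ := ih h
        constructor
        · rw [IsVertex, subtreeAt?_cons, hc, Option.bind_some]; exact h1
        · simpa using Nat.succ_le_succ h2

lemma heightList_le_iff {cs : List OTree} {n : ℕ} :
    heightList cs ≤ n ↔ ∀ c ∈ cs, height c ≤ n := by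
  induction cs with
  | nil => simp [heightList]
  | cons x xs ih => rw [heightList]; simp [ih]

lemma height_trunc_le (k : ℕ) (t : OTree) : height (trunc k t) ≤ k + 1 := by
  induction k generalizing t with
  | zero => rw [trunc, height_node, heightList]
  | succ k ih =>
    obtain ⟨cs⟩ := t
    rw [trunc, height_node]
    have : heightList (List.map (trunc k) (OTree.node cs).children) ≤ k + 1 := by
      rw [heightList_le_iff]
      intro c hc
      obtain ⟨c', _, rfl⟩ := List.mem_map.1 hc
      exact ih c'
    omega

lemma height_trunc {t : OTree} (ht : Uniform t) {k : ℕ} (hk : k + 1 ≤ height t) :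
    height (trunc k t) = k + 1 := by
  refine le_antisymm (height_trunc_le k t) ?_
  obtain ⟨p, hp, hlen⟩ := exists_deep_leaf t
  have hv : IsVertex t p := by rw [IsVertex, hp]; rfl
  obtain ⟨s, hs⟩ := isVertex_prefix hv k
  have htk : (p.take k).length = k := by
    rw [List.length_take]; omega
  have h2 := height_subtree (subtreeAt?_trunc (le_of_eq htk) hs)
  have hpos := height_pos (trunc (k - (p.take k).length) s)
  omega

lemma uniform_trunc {t : OTree} (ht : Uniform t) {k : ℕ} (hk : k + 1 ≤ height t) :
    Uniform (trunc k t) := by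
  intro p hp
  rw [height_trunc ht hk]
  have hv : IsVertex (trunc k t) p := by rw [IsVertex, IsLeaf] at *; rw [hp]; rfl
  obtain ⟨hvt, hlen⟩ := isVertex_trunc hv
  rw [IsVertex, Option.isSome_iff_exists] at hvt
  obtain ⟨s, hs⟩ := hvt
  have heq := subtreeAt?_trunc hlen hs
  rw [IsLeaf] at hp
  rw [hp] at heq
  rcases Nat.lt_or_ge p.length k with hlt | hge
  · exfalso
    obtain ⟨m, hm⟩ : ∃ m, k - p.length = m + 1 := ⟨k - p.length - 1, by omega⟩
    rw [hm] at heq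
    obtain ⟨cs⟩ := s
    rw [trunc] at heq
    simp only [Option.some.injEq, OTree.node.injEq] at heq
    have hcs : cs = [] := by
      cases cs with
      | nil => rfl
      | cons a l => simp [OTree.children] at heq
    subst hcs
    have hleaf : IsLeaf t p := hs
    have := ht _ hleaf
    omega
  · omega

/- ===== levelPaths lemmas ===== -/

lemma mem_levelPaths {m : ℕ} {t : OTree} {q : List ℕ} :
    q ∈ levelPaths m t ↔ q.length = m ∧ IsVertex t q := by
  induction m generalizing t q with
  | zero =>
    rw [levelPaths]
    simp only [List.mem_singleton]
    constructor
    · rintro rfl; exact ⟨rfl, by rw [IsVertex, subtreeAt?]; rfl⟩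
    · rintro ⟨h, -⟩; exact List.length_eq_zero_iff.1 h
  | succ m ih =>
    rw [levelPaths, List.mem_flatten]
    constructor
    · rintro ⟨l, hl, hq⟩
      obtain ⟨⟨c, i⟩, hic, rfl⟩ := List.mem_map.1 hl
      obtain ⟨q', hq', rfl⟩ := List.mem_map.1 hq
      have hgc : t.children[i]? = some c := List.mk_mem_zipIdx_iff_getElem?.1 hic
      obtain ⟨hlen, hvert⟩ := ih.1 hq'
      refine ⟨by simp [hlen], ?_⟩
      rw [IsVertex, subtreeAt?_cons, hgc, Option.bind_some]
      exact hvert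
    · rintro ⟨hlen, hvert⟩
      cases q with
      | nil => simp at hlen
      | cons i q' =>
        rw [IsVertex, subtreeAt?_cons] at hvert
        cases hgc : t.children[i]? with
        | none => rw [hgc] at hvert; simp at hvert
        | some c =>
          rw [hgc, Option.bind_some] at hvert
          refine ⟨(levelPaths m c).map (i :: ·), ?_, ?_⟩
          · exact List.mem_map.2 ⟨(c, i), List.mk_mem_zipIdx_iff_getElem?.2 hgc, rfl⟩
          · exact List.mem_map.2 ⟨q', ih.2 ⟨by simpa using hlen, hvert⟩, rfl⟩

lemma pairwise_enumFrom {α : Type*} (xs : List α) (n : ℕ) :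
    List.Pairwise (fun a b => a.2 < b.2) (xs.zipIdx n) := by
  induction xs generalizing n with
  | nil => simp
  | cons x xs ih =>
    rw [List.zipIdx_cons]
    refine List.Pairwise.cons ?_ (ih (n+1))
    rintro ⟨c, i⟩ hb
    have := (List.mem_zipIdx hb).1
    show n < i
    omega

lemma pairwise_levelPaths (m : ℕ) (t : OTree) :
    List.Pairwise (List.Lex (· < ·)) (levelPaths m t) := by
  induction m generalizing t with
  | zero => rw [levelPaths]; simp
  | succ m ih =>
    rw [levelPaths]
    rw [List.pairwise_flatten]
    constructor
    · intro l hl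
      obtain ⟨⟨c, i⟩, _, rfl⟩ := List.mem_map.1 hl
      rw [List.pairwise_map]
      exact (ih c).imp fun h => List.Lex.cons h
    · rw [List.pairwise_map]
      refine List.Pairwise.imp ?_ (pairwise_enumFrom t.children 0)
      rintro ⟨c, i⟩ ⟨d, j⟩ hij x hx y hy
      obtain ⟨x', _, rfl⟩ := List.mem_map.1 hx
      obtain ⟨y', _, rfl⟩ := List.mem_map.1 hy
      exact List.Lex.rel hij

/- ===== lex lemmas ===== -/

lemma lex_take {u v : List ℕ} (h : List.Lex (· < ·) u v) (m : ℕ) :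
    u.take m = v.take m ∨ List.Lex (· < ·) (u.take m) (v.take m) := by
  induction m generalizing u v with
  | zero => left; simp
  | succ m ih =>
    cases h with
    | nil =>
      right
      rw [List.take_nil, List.take_succ_cons]
      exact List.Lex.nil
    | @rel a l₁ b l₂ hab =>
      right
      rw [List.take_succ_cons, List.take_succ_cons]
      exact List.Lex.rel hab
    | @cons a l₁ l₂ h' =>
      rw [List.take_succ_cons, List.take_succ_cons]
      rcases ih h' with heq | hlex
      · left; rw [heq]
      · right; exact List.Lex.cons hlex

lemma lex_append_iff {a x y : List ℕ} :
    List.Lex (· < ·) (a ++ x) (a ++ y) ↔ List.Lex (· < ·) x y := by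
  induction a with
  | nil => exact Iff.rfl
  | cons i a ih => rw [List.cons_append, List.cons_append, List.lex_cons_iff]; exact ih

/- ===== indexOf lemmas ===== -/

lemma indexOf_map_append {q : List ℕ} (l : List (List ℕ)) (a : List ℕ) :
    (l.map (q ++ ·)).idxOf (q ++ a) = l.idxOf a := by
  induction l with
  | nil => simp
  | cons x xs ih =>
    simp only [List.map_cons, List.idxOf_cons, Bool.cond_eq_if, beq_iff_eq, ih]
    by_cases h : x = a
    · simp [h]
    · have h' : ¬ (q ++ x = q ++ a) := fun he => h (List.append_cancel_left he)
      simp [h, h']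

lemma indexOf_append_of_mem' {α : Type*} [BEq α] [LawfulBEq α] {a : α} {l₁ l₂ : List α}
    (h : a ∈ l₁) : List.idxOf a (l₁ ++ l₂) = List.idxOf a l₁ := by
  induction l₁ with
  | nil => simp at h
  | cons x xs ih =>
    rw [List.cons_append, List.idxOf_cons, List.idxOf_cons]
    cases hx : x == a with
    | true => simp
    | false =>
      have hxa : x ≠ a := by simpa using hx
      rcases List.mem_cons.1 h with rfl | h'
      · exact absurd rfl hxa
      · simp [ih h']

lemma indexOf_append_of_not_mem' {α : Type*} [BEq α] [LawfulBEq α] {a : α} {l₁ l₂ : List α}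
    (h : a ∉ l₁) : List.idxOf a (l₁ ++ l₂) = l₁.length + List.idxOf a l₂ := by
  induction l₁ with
  | nil => simp
  | cons x xs ih =>
    have hxa : (x == a) = false := by
      simp only [beq_eq_false_iff_ne]
      intro he
      exact h (he ▸ List.mem_cons_self (a := x) (l := xs))
    rw [List.cons_append, List.idxOf_cons, hxa]
    simp only [cond_false, List.length_cons]
    rw [ih (fun h' => h (List.mem_cons_of_mem _ h'))]
    omega

lemma indexOf_lt_length' {α : Type*} [BEq α] [LawfulBEq α] {a : α} {l : List α}
    (h : a ∈ l) : List.idxOf a l < l.length := by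
  induction l with
  | nil => simp at h
  | cons x xs ih =>
    rw [List.idxOf_cons]
    cases hx : x == a with
    | false =>
      simp only [cond_false, List.length_cons]
      rcases List.mem_cons.1 h with rfl | h'
      · simp at hx
      · have := ih h'; omega
    | true => simp

lemma indexOf_split_lt {α : Type*} [BEq α] [LawfulBEq α] {A B : List α} {u v : α}
    (hu : u ∈ A) (hv : v ∉ A) :
    (A ++ B).idxOf u < (A ++ B).idxOf v := by
  rw [indexOf_append_of_mem' hu, indexOf_append_of_not_mem' hv]
  exact lt_of_lt_of_le (indexOf_lt_length' hu) (Nat.le_add_right _ _)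

lemma take_append_of_length {α : Type*} {l r : List α} {m : ℕ} (h : l.length = m) :
    (l ++ r).take m = l := by
  subst h
  exact List.take_left

lemma lex_asymm {x y : List ℕ} (h : List.Lex (· < ·) x y) : ¬ List.Lex (· < ·) y x :=
  Std.Asymm.asymm x y h

lemma lex_irrefl (x : List ℕ) : ¬ List.Lex (· < ·) x x :=
  fun h => Std.Asymm.asymm x x h h

/- ===== cutLevel and vEBAux lemmas ===== -/

lemma cutLevel_bounds {ε : ℝ} (hε0 : 0 < ε) (hε1 : ε ≤ 1/2) {h : ℕ} (hh : 2 ≤ h) :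
    1 ≤ cutLevel ε h ∧ cutLevel ε h < h := by
  refine ⟨le_max_right _ _, ?_⟩
  have h1 : ε * (h : ℝ) ≤ (h : ℝ) / 2 := by
    calc ε * (h : ℝ) ≤ (1/2) * (h : ℝ) := by
          apply mul_le_mul_of_nonneg_right hε1 (by positivity)
      _ = (h : ℝ) / 2 := by ring
  have h2 : ⌊ε * (h : ℝ)⌋₊ ≤ h / 2 := by
    calc ⌊ε * (h : ℝ)⌋₊ ≤ ⌊(h : ℝ) / 2⌋₊ := Nat.floor_le_floor h1
      _ = h / 2 := by
          rw [show ((2:ℝ) = ((2:ℕ):ℝ)) by norm_num, Nat.floor_div_natCast, Nat.floor_natCast]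
  rw [cutLevel]
  exact max_lt (by omega) (by omega)

lemma vEBAux_base (ε : ℝ) (fuel : ℕ) (t : OTree) (h : height t ≤ 1) :
    vEBAux ε (fuel+1) t = [[]] := by
  rw [vEBAux, if_pos h]

lemma vEBAux_succ (ε : ℝ) (fuel : ℕ) (t : OTree) (h : ¬ height t ≤ 1) :
    vEBAux ε (fuel+1) t =
      vEBAux ε fuel (trunc (cutLevel ε (height t) - 1) t) ++
        ((levelPaths (cutLevel ε (height t)) t).map fun q =>
          match subtreeAt? t q with
          | some s => (vEBAux ε fuel s).map (q ++ ·)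
          | none => []).flatten := by
  rw [vEBAux, if_neg h]

lemma vertex_of_height_one {t : OTree} (h : height t ≤ 1) {p : List ℕ}
    (hp : IsVertex t p) : p = [] := by
  rw [IsVertex, Option.isSome_iff_exists] at hp
  obtain ⟨s, hs⟩ := hp
  have h1 := height_subtree hs
  have h2 := height_pos s
  have : p.length = 0 := by omega
  exact List.length_eq_zero_iff.1 this

lemma mem_segment {ε : ℝ} {fuel : ℕ} {t : OTree} {q x : List ℕ}
    (hx : x ∈ (match subtreeAt? t q with
        | some s => (vEBAux ε fuel s).map (q ++ ·)
        | none => ([] : List (List ℕ)))) :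
    ∃ s r, subtreeAt? t q = some s ∧ r ∈ vEBAux ε fuel s ∧ x = q ++ r := by
  split at hx
  · next s hs =>
      obtain ⟨r, hr, rfl⟩ := List.mem_map.1 hx
      exact ⟨s, r, hs, hr, rfl⟩
  · simp at hx

lemma mem_segment_of {ε : ℝ} {fuel : ℕ} {t s : OTree} {q r x : List ℕ}
    (hs : subtreeAt? t q = some s) (hr : r ∈ vEBAux ε fuel s) (hx : x = q ++ r) :
    x ∈ (match subtreeAt? t q with
        | some s => (vEBAux ε fuel s).map (q ++ ·)
        | none => ([] : List (List ℕ))) := by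
  subst hx
  split
  · next s' hs' =>
      rw [hs'] at hs
      cases hs
      exact List.mem_map.2 ⟨r, hr, rfl⟩
  · next hs' => rw [hs'] at hs; cases hs

/- ===== completeness and soundness ===== -/

lemma mem_vEBAux {ε : ℝ} (hε0 : 0 < ε) (hε1 : ε ≤ 1/2) :
    ∀ (fuel : ℕ) (t : OTree), Uniform t → height t ≤ fuel →
      ∀ p, IsVertex t p → p ∈ vEBAux ε fuel t := by
  intro fuel
  induction fuel with
  | zero =>
    intro t _ hle
    exact absurd hle (by have := height_pos t; omega)
  | succ fuel ih =>
    intro t ht hle p hp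
    by_cases h1 : height t ≤ 1
    · rw [vEBAux_base ε fuel t h1, vertex_of_height_one h1 hp]
      exact List.mem_singleton.2 rfl
    · rw [vEBAux_succ ε fuel t h1]
      set m := cutLevel ε (height t) with hm
      obtain ⟨hm1, hm2⟩ := cutLevel_bounds hε0 hε1 (show 2 ≤ height t by omega)
      have hk : (m - 1) + 1 ≤ height t := by omega
      rw [List.mem_append]
      by_cases hpl : p.length < m
      · left
        apply ih _ (uniform_trunc ht hk) (by rw [height_trunc ht hk]; omega)
        rw [IsVertex, Option.isSome_iff_exists] at hp ⊢
        obtain ⟨s, hs⟩ := hp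
        exact ⟨_, subtreeAt?_trunc (by omega) hs⟩
      · right
        obtain ⟨s, hs⟩ := isVertex_prefix hp m
        have hql : (p.take m).length = m := by rw [List.length_take]; omega
        rw [IsVertex, Option.isSome_iff_exists] at hp
        obtain ⟨s', hs'⟩ := hp
        have hs2 : subtreeAt? s (p.drop m) = some s' := by
          have h' : subtreeAt? t (p.take m ++ p.drop m) = some s' := by
            rw [List.take_append_drop]; exact hs'
          rwa [subtreeAt?_append, hs, Option.bind_some] at h'
        have hheight_s : height s ≤ fuel := by
          have := height_subtree hs
          omega
        have hmem : p.drop m ∈ vEBAux ε fuel s :=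
          ih s (subtree_uniform ht hs) hheight_s _ (by rw [IsVertex, hs2]; rfl)
        rw [List.mem_flatten]
        refine ⟨_, List.mem_map.2
          ⟨p.take m, mem_levelPaths.2 ⟨hql, by rw [IsVertex, hs]; rfl⟩, rfl⟩, ?_⟩
        exact mem_segment_of hs hmem (List.take_append_drop m p).symm

lemma isVertex_of_mem_vEBAux {ε : ℝ} (hε0 : 0 < ε) (hε1 : ε ≤ 1/2) :
    ∀ (fuel : ℕ) (t : OTree), Uniform t → height t ≤ fuel →
      ∀ p, p ∈ vEBAux ε fuel t → IsVertex t p := by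
  intro fuel
  induction fuel with
  | zero =>
    intro t _ hle
    exact absurd hle (by have := height_pos t; omega)
  | succ fuel ih =>
    intro t ht hle p hp
    by_cases h1 : height t ≤ 1
    · rw [vEBAux_base ε fuel t h1] at hp
      rw [List.mem_singleton.1 hp, IsVertex, subtreeAt?]
      rfl
    · rw [vEBAux_succ ε fuel t h1] at hp
      set m := cutLevel ε (height t) with hm
      obtain ⟨hm1, hm2⟩ := cutLevel_bounds hε0 hε1 (show 2 ≤ height t by omega)
      have hk : (m - 1) + 1 ≤ height t := by omega
      rcases List.mem_append.1 hp with hp | hp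
      · have := ih _ (uniform_trunc ht hk) (by rw [height_trunc ht hk]; omega) p hp
        exact (isVertex_trunc this).1
      · obtain ⟨l, hl, hpl⟩ := List.mem_flatten.1 hp
        obtain ⟨q, hq, rfl⟩ := List.mem_map.1 hl
        obtain ⟨s0, r0, hs0, hr0, rfl⟩ := mem_segment hpl
        have hheight_s : height s0 ≤ fuel := by
          have h' := height_subtree hs0
          have : q.length = m := (mem_levelPaths.1 hq).1
          omega
        have hrv := ih s0 (subtree_uniform ht hs0) hheight_s r0 hr0
        rw [IsVertex, Option.isSome_iff_exists] at hrv
        obtain ⟨s1, hs1⟩ := hrv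
        rw [IsVertex, subtreeAt?_append, hs0, Option.bind_some, hs1]
        rfl

/- ===== main induction ===== -/

lemma vEBAux_index_lt {ε : ℝ} (hε0 : 0 < ε) (hε1 : ε ≤ 1/2) :
    ∀ (fuel : ℕ) (t : OTree), Uniform t → height t ≤ fuel →
      ∀ u v, IsVertex t u → IsVertex t v → u.length = v.length →
        List.Lex (· < ·) u v →
        (vEBAux ε fuel t).idxOf u < (vEBAux ε fuel t).idxOf v := by
  intro fuel
  induction fuel with
  | zero =>
    intro t _ hle
    exact absurd hle (by have := height_pos t; omega)
  | succ fuel ih =>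
    intro t ht hle u v hu hv hlen hlex
    by_cases h1 : height t ≤ 1
    · exfalso
      have hu0 := vertex_of_height_one h1 hu
      have hv0 := vertex_of_height_one h1 hv
      rw [hu0, hv0] at hlex
      exact lex_irrefl _ hlex
    · rw [vEBAux_succ ε fuel t h1]
      set m := cutLevel ε (height t) with hm
      obtain ⟨hm1, hm2⟩ := cutLevel_bounds hε0 hε1 (show 2 ≤ height t by omega)
      have hk : (m - 1) + 1 ≤ height t := by omega
      have htu := uniform_trunc ht hk
      have hth : height (trunc (m-1) t) ≤ fuel := by rw [height_trunc ht hk]; omega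
      by_cases hul : u.length < m
      · -- Case A : both vertices lie in the top tree
        have hvl : v.length < m := by omega
        obtain ⟨su, hsu⟩ := Option.isSome_iff_exists.1 hu
        obtain ⟨sv, hsv⟩ := Option.isSome_iff_exists.1 hv
        have hut : IsVertex (trunc (m-1) t) u := by
          rw [IsVertex, subtreeAt?_trunc (by omega) hsu]; rfl
        have hvt : IsVertex (trunc (m-1) t) v := by
          rw [IsVertex, subtreeAt?_trunc (by omega) hsv]; rfl
        have humem := mem_vEBAux hε0 hε1 fuel _ htu hth u hut
        have hvmem := mem_vEBAux hε0 hε1 fuel _ htu hth v hvt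
        rw [indexOf_append_of_mem' humem, indexOf_append_of_mem' hvmem]
        exact ih _ htu hth u v hut hvt hlen hlex
      · -- Case B : both vertices lie in bottom trees
        push_neg at hul
        have hvl : m ≤ v.length := by omega
        have hunotT : u ∉ vEBAux ε fuel (trunc (m-1) t) := by
          intro hmem
          have := (isVertex_trunc (isVertex_of_mem_vEBAux hε0 hε1 fuel _ htu hth u hmem)).2
          omega
        have hvnotT : v ∉ vEBAux ε fuel (trunc (m-1) t) := by
          intro hmem
          have := (isVertex_trunc (isVertex_of_mem_vEBAux hε0 hε1 fuel _ htu hth v hmem)).2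
          omega
        obtain ⟨su, hsu⟩ := isVertex_prefix hu m
        obtain ⟨sv, hsv⟩ := isVertex_prefix hv m
        have hqu_len : (u.take m).length = m := by rw [List.length_take]; omega
        have hqv_len : (v.take m).length = m := by rw [List.length_take]; omega
        have hquP : u.take m ∈ levelPaths m t :=
          mem_levelPaths.2 ⟨hqu_len, by rw [IsVertex, hsu]; rfl⟩
        have hqvP : v.take m ∈ levelPaths m t :=
          mem_levelPaths.2 ⟨hqv_len, by rw [IsVertex, hsv]; rfl⟩
        -- membership of the suffixes in the bottom-tree lists
        obtain ⟨su', hsu'⟩ := Option.isSome_iff_exists.1 hu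
        obtain ⟨sv', hsv'⟩ := Option.isSome_iff_exists.1 hv
        have hsu2 : subtreeAt? su (u.drop m) = some su' := by
          have h' : subtreeAt? t (u.take m ++ u.drop m) = some su' := by
            rw [List.take_append_drop]; exact hsu'
          rwa [subtreeAt?_append, hsu, Option.bind_some] at h'
        have hsv2 : subtreeAt? sv (v.drop m) = some sv' := by
          have h' : subtreeAt? t (v.take m ++ v.drop m) = some sv' := by
            rw [List.take_append_drop]; exact hsv'
          rwa [subtreeAt?_append, hsv, Option.bind_some] at h'
        have hsu_h : height su ≤ fuel := by
          have := height_subtree hsu; omega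
        have hsv_h : height sv ≤ fuel := by
          have := height_subtree hsv; omega
        have humem : u.drop m ∈ vEBAux ε fuel su :=
          mem_vEBAux hε0 hε1 fuel su (subtree_uniform ht hsu) hsu_h _
            (by rw [IsVertex, hsu2]; rfl)
        have hvmem : v.drop m ∈ vEBAux ε fuel sv :=
          mem_vEBAux hε0 hε1 fuel sv (subtree_uniform ht hsv) hsv_h _
            (by rw [IsVertex, hsv2]; rfl)
        -- split the level at u.take m
        obtain ⟨P1, P2, hP⟩ := List.append_of_mem hquP
        have hcross : ∀ a ∈ P1, List.Lex (· < ·) a (u.take m) := by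
          have h' := (List.pairwise_append.1 (hP ▸ pairwise_levelPaths m t)).2.2
          intro a ha
          exact h' a ha _ List.mem_cons_self
        have hqu_notP1 : u.take m ∉ P1 := fun hmem => lex_irrefl _ (hcross _ hmem)
        have hnot1 : ∀ x : List ℕ,
            x ∈ (P1.map fun q => match subtreeAt? t q with
                | some s => (vEBAux ε fuel s).map (q ++ ·)
                | none => ([] : List (List ℕ))).flatten → x.take m ∈ P1 := by
          intro x hx
          obtain ⟨l, hl, hxl⟩ := List.mem_flatten.1 hx
          obtain ⟨q0, hq0, rfl⟩ := List.mem_map.1 hl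
          obtain ⟨s0, r0, hs0, hr0, rfl⟩ := mem_segment hxl
          have hq0len : q0.length = m :=
            (mem_levelPaths.1 (by rw [hP]; exact List.mem_append_left _ hq0)).1
          rw [take_append_of_length hq0len]
          exact hq0
        rw [hP, List.map_append, List.map_cons, List.flatten_append, List.flatten_cons,
          ← List.append_assoc]
        by_cases hq_eq : u.take m = v.take m
        · -- Sub-case B1 : same bottom tree
          have hsv_at_u : subtreeAt? t (u.take m) = some sv := by rw [hq_eq]; exact hsv
          have hsusv : su = sv := by
            rw [hsu] at hsv_at_u; cases hsv_at_u; rfl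
          subst hsusv
          have hu_not1 : u ∉ (P1.map fun q => match subtreeAt? t q with
              | some s => (vEBAux ε fuel s).map (q ++ ·)
              | none => ([] : List (List ℕ))).flatten :=
            fun h => hqu_notP1 (hnot1 u h)
          have hv_not1 : v ∉ (P1.map fun q => match subtreeAt? t q with
              | some s => (vEBAux ε fuel s).map (q ++ ·)
              | none => ([] : List (List ℕ))).flatten := by
            intro h
            have := hnot1 v h
            rw [← hq_eq] at this
            exact hqu_notP1 this
          have hu_notA : u ∉ vEBAux ε fuel (trunc (m-1) t) ++
              (P1.map fun q => match subtreeAt? t q with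
                | some s => (vEBAux ε fuel s).map (q ++ ·)
                | none => ([] : List (List ℕ))).flatten := by
            rw [List.mem_append]; push_neg; exact ⟨hunotT, hu_not1⟩
          have hv_notA : v ∉ vEBAux ε fuel (trunc (m-1) t) ++
              (P1.map fun q => match subtreeAt? t q with
                | some s => (vEBAux ε fuel s).map (q ++ ·)
                | none => ([] : List (List ℕ))).flatten := by
            rw [List.mem_append]; push_neg; exact ⟨hvnotT, hv_not1⟩
          rw [indexOf_append_of_not_mem' hu_notA,
            indexOf_append_of_not_mem' hv_notA]
          apply Nat.add_lt_add_left
          have huF : u ∈ (match subtreeAt? t (u.take m) with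
              | some s => (vEBAux ε fuel s).map ((u.take m) ++ ·)
              | none => ([] : List (List ℕ))) :=
            mem_segment_of hsu humem (List.take_append_drop m u).symm
          have hvF : v ∈ (match subtreeAt? t (u.take m) with
              | some s => (vEBAux ε fuel s).map ((u.take m) ++ ·)
              | none => ([] : List (List ℕ))) :=
            mem_segment_of hsu hvmem
              (by rw [hq_eq, List.take_append_drop])
          rw [indexOf_append_of_mem' huF, indexOf_append_of_mem' hvF]
          have hFq : (match subtreeAt? t (u.take m) with
              | some s => (vEBAux ε fuel s).map ((u.take m) ++ ·)
              | none => ([] : List (List ℕ))) =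
              (vEBAux ε fuel su).map ((u.take m) ++ ·) := by
            rw [hsu]
          rw [hFq]
          have h1 : ((vEBAux ε fuel su).map ((u.take m) ++ ·)).idxOf
              (u.take m ++ u.drop m) = (vEBAux ε fuel su).idxOf (u.drop m) :=
            indexOf_map_append _ _
          have h2 : ((vEBAux ε fuel su).map ((u.take m) ++ ·)).idxOf
              (u.take m ++ v.drop m) = (vEBAux ε fuel su).idxOf (v.drop m) :=
            indexOf_map_append _ _
          have e1 : u.take m ++ u.drop m = u := List.take_append_drop m u
          have e2 : u.take m ++ v.drop m = v := by rw [hq_eq, List.take_append_drop]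
          rw [e1] at h1
          rw [e2] at h2
          rw [h1, h2]
          apply ih su (subtree_uniform ht hsu) hsu_h
          · rw [IsVertex, hsu2]; rfl
          · rw [IsVertex, hsv2]; rfl
          · rw [List.length_drop, List.length_drop, hlen]
          · have hlex' : List.Lex (· < ·) (u.take m ++ u.drop m) (u.take m ++ v.drop m) := by
              rw [e1, e2]; exact hlex
            exact lex_append_iff.1 hlex'
        · -- Sub-case B2 : different bottom trees
          have hlexq : List.Lex (· < ·) (u.take m) (v.take m) :=
            (lex_take hlex m).resolve_left hq_eq
          have hqv_notP1 : v.take m ∉ P1 := fun hmem => lex_asymm hlexq (hcross _ hmem)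
          have hv_not1 : v ∉ (P1.map fun q => match subtreeAt? t q with
              | some s => (vEBAux ε fuel s).map (q ++ ·)
              | none => ([] : List (List ℕ))).flatten :=
            fun h => hqv_notP1 (hnot1 v h)
          have hv_notFqu : v ∉ (match subtreeAt? t (u.take m) with
              | some s => (vEBAux ε fuel s).map ((u.take m) ++ ·)
              | none => ([] : List (List ℕ))) := by
            intro h
            obtain ⟨s0, r0, hs0, hr0, heq⟩ := mem_segment h
            have : v.take m = u.take m := by
              rw [heq]; exact take_append_of_length hqu_len
            exact hq_eq this.symm
          have huF : u ∈ (match subtreeAt? t (u.take m) with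
              | some s => (vEBAux ε fuel s).map ((u.take m) ++ ·)
              | none => ([] : List (List ℕ))) :=
            mem_segment_of hsu humem (List.take_append_drop m u).symm
          rw [← List.append_assoc]
          apply indexOf_split_lt
          · exact List.mem_append_right _ huF
          · rw [List.mem_append, List.mem_append]
            push_neg
            exact ⟨⟨hvnotT, hv_not1⟩, hv_notFqu⟩


/-- If `u` and `v` are vertices at the same depth and `u` is to the left
of `v`, then `u` precedes `v` in `vEB_ε(T)`; consequently each level appears in `vEB_ε(T)`
in its left-to-right order. -/
theorem level_order_preserved
    (ε : ℝ) (hε0 : 0 < ε) (hε1 : ε ≤ 1/2) (t : OTree) (ht : Uniform t)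
    (u v : List ℕ) (hu : IsVertex t u) (hv : IsVertex t v)
    (hlen : u.length = v.length) (hlex : List.Lex (· < ·) u v) :
    pos ε t u < pos ε t v := by
  have h := vEBAux_index_lt hε0 hε1 (height t) t ht le_rfl u v hu hv hlen hlex
  unfold pos vEB
  exact h

end VEB
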